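/- arXiv:2103.06203 — 3 statements merged into one kernel-verified Lean document; each statement's English description precedes it below -/
import Mathlib

section
/- Let $p \geq 1$ and $g_1,\dots,g_p \geq 1$ be integers. Let $G$ be a normal $\mathbb{Q}$-algebraic subgroup of $\prod_{q=1}^{p} (\mathbb{G}_{a,\mathbb{Q}}^{2g_q} \rtimes \mathrm{SL}_{2,\mathbb{Q}})$ (where each copy of $\mathrm{SL}_2$ acts diagonally on the corresponding $\mathbb{G}_a^{2g_q} = (\mathbb{G}_a^2)^{g_q}$ via the standard representation) such that $G$ projects surjectively onto $\mathrm{SL}_{2,\mathbb{Q}}^{p}$. Then $G$ equals the whole group $\prod_{q=1}^{p} (\mathbb{G}_{a,\mathbb{Q}}^{2g_q} \rtimes \mathrm{SL}_{2,\mathbb{Q}})$. -/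
/-! Statement 0: a normal (ℚ-points of a) subgroup of
`∏ q, (𝔾ₐ^{2 g_q} ⋊ SL₂)` over ℚ that surjects onto `SL₂^p` is everything. -/

open Matrix

/-- The group `SL₂(ℚ)`. -/
abbrev SL2Q := Matrix.SpecialLinearGroup (Fin 2) ℚ

/-- The diagonal action of `SL₂(ℚ)` on `(ℚ²)^n`, each factor by the standard
representation, as additive automorphisms. -/
noncomputable def diagActQ (n : ℕ) : SL2Q →* Multiplicative (AddAut (Fin n → Fin 2 → ℚ)) where
  toFun γ := Multiplicative.ofAdd (AddEquiv.piCongrRight fun _ : Fin n =>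
    (Matrix.SpecialLinearGroup.toLin' γ).toAddEquiv)
  map_one' := by apply Multiplicative.toAdd.injective; ext v i; simp
  map_mul' := by intro a b; apply Multiplicative.toAdd.injective; ext v i; simp

/-- The same action, as multiplicative automorphisms of the (multiplicatively
written) group `(ℚ²)^n`. -/
noncomputable def diagActQMul (n : ℕ) :
    SL2Q →* MulAut (Multiplicative (Fin n → Fin 2 → ℚ)) where
  toFun γ := AddEquiv.toMultiplicative (Multiplicative.toAdd (diagActQ n γ))
  map_one' := by ext v; simp
  map_mul' := by intro a b; ext v; simp

/-- The ambient group `∏_{q<p} (𝔾ₐ^{2 g q} ⋊ SL₂)(ℚ)`, each `SL₂` acting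
diagonally on the corresponding `(𝔾ₐ²)^{g q}` by the standard representation. -/
abbrev AmbientGroup (p : ℕ) (g : Fin p → ℕ) :=
  ∀ q : Fin p, (Multiplicative (Fin (g q) → Fin 2 → ℚ)) ⋊[diagActQMul (g q)] SL2Q

/-- The projection of the ambient group onto `SL₂(ℚ)^p`, killing the unipotent
radical `∏_q 𝔾ₐ^{2 g q}`. -/
noncomputable def projSL (p : ℕ) (g : Fin p → ℕ) : AmbientGroup p g →* (Fin p → SL2Q) :=
  Pi.monoidHom fun q => SemidirectProduct.rightHom.comp (Pi.evalMonoidHom _ q)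


/-- The element `-I` of `SL₂(ℚ)`. -/
def negOneSL : SL2Q := ⟨-1, by simp [Matrix.det_neg]⟩

lemma comm_inl {N G : Type*} [CommGroup N] [Group G] (φ : G →* MulAut N)
    (n : N) (s : N ⋊[φ] G) :
    SemidirectProduct.inl n * s * (SemidirectProduct.inl n)⁻¹ * s⁻¹ =
      SemidirectProduct.inl (n * (φ s.right n)⁻¹) := by
  ext
  · simp [SemidirectProduct.mul_left, SemidirectProduct.inv_left, map_inv,
      mul_comm, mul_left_comm, mul_assoc]
  · simp [SemidirectProduct.mul_right, SemidirectProduct.inv_right]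

lemma diagActQMul_negOne (n : ℕ) (m : Multiplicative (Fin n → Fin 2 → ℚ)) :
    diagActQMul n negOneSL m = m⁻¹ := by
  apply Multiplicative.toAdd.injective
  funext i j
  show (Matrix.SpecialLinearGroup.toLin' negOneSL) (Multiplicative.toAdd m i) j
      = -(Multiplicative.toAdd m i j)
  rw [Matrix.SpecialLinearGroup.toLin'_apply, Matrix.toLin'_apply]
  show ((-1 : Matrix (Fin 2) (Fin 2) ℚ).mulVec _) j = _
  rw [Matrix.neg_mulVec, Matrix.one_mulVec]
  rfl

/-- If `G` is a normal subgroup of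
`∏_{q=1}^p (𝔾ₐ^{2 g_q} ⋊ SL₂)` (over ℚ) projecting onto `SL₂^p`,
then `G` is the whole group. -/
theorem normal_subgroup_projecting_onto_SL2_pow_is_top
    (p : ℕ) (hp : 1 ≤ p) (g : Fin p → ℕ) (hg : ∀ q, 1 ≤ g q)
    (G : Subgroup (AmbientGroup p g)) (hnorm : G.Normal)
    (hsurj : G.map (projSL p g) = ⊤) :
    G = ⊤ := by
  have hsurj' : ∀ σ : Fin p → SL2Q, ∃ x ∈ G, projSL p g x = σ := by
    intro σ
    have h : σ ∈ G.map (projSL p g) := by rw [hsurj]; trivial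
    simpa [Subgroup.mem_map] using h
  obtain ⟨x, hxG, hx⟩ := hsurj' (fun _ => negOneSL)
  have hxright : ∀ q, (x q).right = negOneSL := fun q => congrFun hx q
  have hinl : ∀ w : ∀ q, Multiplicative (Fin (g q) → Fin 2 → ℚ),
      (fun q => SemidirectProduct.inl (w q) : AmbientGroup p g) ∈ G := by
    intro w
    set w' : ∀ q, Multiplicative (Fin (g q) → Fin 2 → ℚ) :=
      fun q => Multiplicative.ofAdd (fun i j => Multiplicative.toAdd (w q) i j / 2) with hw'
    have hc : ((fun q => SemidirectProduct.inl (w' q)) * x *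
        (fun q => SemidirectProduct.inl (w' q))⁻¹ * x⁻¹ : AmbientGroup p g) ∈ G :=
      mul_mem (hnorm.conj_mem x hxG _) (inv_mem hxG)
    have heq : ((fun q => SemidirectProduct.inl (w' q)) * x *
        (fun q => SemidirectProduct.inl (w' q))⁻¹ * x⁻¹ : AmbientGroup p g)
        = fun q => SemidirectProduct.inl (w q) := by
      funext q
      have h1 : ((fun q => SemidirectProduct.inl (w' q)) * x *
          (fun q => SemidirectProduct.inl (w' q))⁻¹ * x⁻¹ : AmbientGroup p g) q
          = SemidirectProduct.inl (w' q) * x q * (SemidirectProduct.inl (w' q))⁻¹ * (x q)⁻¹ := rfl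
      rw [h1, comm_inl, hxright q, diagActQMul_negOne, inv_inv]
      congr 1
      apply Multiplicative.toAdd.injective
      funext i j
      show Multiplicative.toAdd (w q) i j / 2 + Multiplicative.toAdd (w q) i j / 2
          = Multiplicative.toAdd (w q) i j
      ring
    rw [← heq]; exact hc
  rw [eq_top_iff]; intro y _
  obtain ⟨z, hzG, hz⟩ := hsurj' (fun q => (y q).right)
  set u : AmbientGroup p g :=
    fun q => SemidirectProduct.inl ((y q).left * ((z q).left)⁻¹) with hu
  have h1 : u ∈ G := hinl _
  have h2 := mul_mem h1 hzG
  have hy : y = u * z := by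
    funext q
    have h3 : (u * z) q = SemidirectProduct.inl ((y q).left * ((z q).left)⁻¹) * z q := rfl
    rw [h3]
    apply SemidirectProduct.ext
    · show (y q).left = (y q).left * ((z q).left)⁻¹ * (diagActQMul (g q) 1) (z q).left
      simp
    · show (y q).right = 1 * (z q).right
      rw [one_mul]
      exact (congrFun hz q).symm
  rw [hy]; exact h2
end

section
/- Let $\gamma = ((m,n), \begin{pmatrix} a & b \\ c & d \end{pmatrix}) \in \mathbb{Z}^2 \rtimes \mathrm{SL}_2(\mathbb{Z})$ act on $(z,\tau) \in \mathbb{C} \times \mathcal{H}_1$ by $(z,\tau) \mapsto \left(\frac{z+m+n\tau}{c\tau+d}, \frac{a\tau+b}{c\tau+d}\right)$, and write $(z',\tau')$ for the image. Define $y = \mathrm{Im}(z)/\mathrm{Im}(\tau)$ and $y' = \mathrm{Im}(z')/\mathrm{Im}(\tau')$. Then the smooth $(1,1)$-form $\omega = \frac{i}{\mathrm{Im}(\tau)}(dz - y\, d\tau) \wedge (d\bar z - y\, d\bar\tau)$ on $\mathbb{C} \times \mathcal{H}_1$ is invariant under this action, i.e., the pullback of $\omega$ under the action of $\gamma$ equals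 $\omega$. -/
open Complex

/-! Statement 5: the smooth (1,1)-form
`ω = (i/Im τ) (dz - y dτ) ∧ (d z̄ - y d τ̄)`, `y = Im z / Im τ`, on `ℂ × ℍ₁`
is invariant under the action of `ℤ² ⋊ SL₂(ℤ)`.  We express `ω` at a point
`p = (z,τ)` as the alternating form on tangent vectors
`ω_p(u,v) = (i/Im τ)(η_p(u) conj(η_p(v)) - η_p(v) conj(η_p(u)))`
with `η_p(u) = u₁ - y u₂`, and invariance as the statement that the pullback
of `ω` along the (real) derivative of the action map equals `ω`. -/

/-- `η_p(u) = dz(u) - y dτ(u)` at the point `p = (z,τ)`, `y = Im z / Im τ`. -/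
noncomputable def etaForm (p : ℂ × ℂ) (u : ℂ × ℂ) : ℂ :=
  u.1 - ((p.1.im / p.2.im : ℝ) : ℂ) * u.2

/-- The `(1,1)`-form `ω = (i / Im τ) (dz - y dτ) ∧ (dz̄ - y dτ̄)` evaluated at
the point `p` on the pair of tangent vectors `(u, v)`. -/
noncomputable def omegaForm (p : ℂ × ℂ) (u v : ℂ × ℂ) : ℂ :=
  (Complex.I / (p.2.im : ℂ)) *
    (etaForm p u * (starRingEnd ℂ) (etaForm p v) -
      etaForm p v * (starRingEnd ℂ) (etaForm p u))

/-- The action of the element `((m,n), [[a,b],[c,d]])` of `ℤ² ⋊ SL₂(ℤ)` on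
`ℂ × ℍ₁ ⊆ ℂ × ℂ`. -/
noncomputable def gammaAction (m n a b c d : ℤ) (p : ℂ × ℂ) : ℂ × ℂ :=
  ((p.1 + m + n * p.2) / (c * p.2 + d), ((a : ℂ) * p.2 + b) / (c * p.2 + d))

/-- Express the coerced imaginary part via conjugation. -/
lemma im_coe_eq (w : ℂ) : (w.im : ℂ) = (w - (starRingEnd ℂ) w) / (2 * Complex.I) := by
  rw [Complex.sub_conj]
  push_cast
  field_simp [Complex.I_ne_zero]

set_option maxHeartbeats 2000000 in
/-- The form `ω` is invariant under `ℤ² ⋊ SL₂(ℤ)`: for every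
group element, the pullback of `ω` under the differential of the action map
equals `ω` at every point of `ℂ × ℍ₁`. -/
theorem omegaForm_invariant (m n a b c d : ℤ) (hdet : a * d - b * c = 1)
    (p : ℂ × ℂ) (hp : 0 < p.2.im) (u v : ℂ × ℂ) :
    omegaForm (gammaAction m n a b c d p)
        (fderiv ℝ (gammaAction m n a b c d) p u)
        (fderiv ℝ (gammaAction m n a b c d) p v)
      = omegaForm p u v := by
  have hdetC : (a : ℂ) * d - b * c = 1 := by exact_mod_cast hdet
  have hτim : (p.2.im : ℝ) ≠ 0 := ne_of_gt hp
  have hτimC : ((p.2.im : ℝ) : ℂ) ≠ 0 := by exact_mod_cast hτim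
  have hj : (c : ℂ) * p.2 + d ≠ 0 := by
    intro h
    have him : ((c : ℂ) * p.2 + d).im = 0 := by rw [h]; simp
    simp [Complex.add_im, Complex.mul_im] at him
    rcases him with h' | h'
    · have hc0 : c = 0 := by exact_mod_cast h'
      have hd0 : d = 0 := by
        have : (d : ℂ) = 0 := by simpa [hc0] using h
        exact_mod_cast this
      rw [hc0, hd0] at hdet; simp at hdet
    · exact hτim h'
  have hjconj : (starRingEnd ℂ) ((c : ℂ) * p.2 + d)
      = (c : ℂ) * (starRingEnd ℂ) p.2 + d := by
    simp [map_add, map_mul, map_intCast]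
  have hjc : (c : ℂ) * (starRingEnd ℂ) p.2 + d ≠ 0 := by
    intro h0
    apply hj
    have h1 := congrArg (starRingEnd ℂ) h0
    simpa [map_add, map_mul, map_intCast, Complex.conj_conj] using h1
  have h2I : (2 * Complex.I : ℂ) ≠ 0 := by simp [Complex.I_ne_zero]
  have hsub : p.2 - (starRingEnd ℂ) p.2 ≠ 0 := by
    rw [Complex.sub_conj]
    simp [hτim, Complex.I_ne_zero]
  -- compute the derivative
  have hA : HasFDerivAt (fun q : ℂ × ℂ => q.1 + (m : ℂ) + (n : ℂ) * q.2)
      ((ContinuousLinearMap.fst ℂ ℂ ℂ) + (n : ℂ) • (ContinuousLinearMap.snd ℂ ℂ ℂ)) p :=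
    (hasFDerivAt_fst.add_const (m : ℂ)).add ((hasFDerivAt_snd (𝕜 := ℂ)).const_mul (n : ℂ))
  have hA2 : HasFDerivAt (fun q : ℂ × ℂ => (a : ℂ) * q.2 + (b : ℂ))
      ((a : ℂ) • (ContinuousLinearMap.snd ℂ ℂ ℂ)) p :=
    ((hasFDerivAt_snd (𝕜 := ℂ)).const_mul (a : ℂ)).add_const (b : ℂ)
  have hB : HasFDerivAt (fun q : ℂ × ℂ => (c : ℂ) * q.2 + d)
      ((c : ℂ) • (ContinuousLinearMap.snd ℂ ℂ ℂ)) p :=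
    ((hasFDerivAt_snd (𝕜 := ℂ)).const_mul (c : ℂ)).add_const (d : ℂ)
  have hinv := (hasFDerivAt_inv' (𝕜 := ℂ) hj).comp p hB
  have hC1 := hA.mul hinv
  have hC2 := hA2.mul hinv
  have hG : HasFDerivAt (gammaAction m n a b c d) (ContinuousLinearMap.prod
      ((p.1 + (m : ℂ) + (n : ℂ) * p.2) •
          (-((ContinuousLinearMap.mulLeftRight ℂ ℂ) ((c : ℂ) * p.2 + d)⁻¹)
              ((c : ℂ) * p.2 + d)⁻¹).comp
            ((c : ℂ) • ContinuousLinearMap.snd ℂ ℂ ℂ) +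
        ((c : ℂ) * p.2 + d)⁻¹ •
          (ContinuousLinearMap.fst ℂ ℂ ℂ + (n : ℂ) • ContinuousLinearMap.snd ℂ ℂ ℂ))
      (((a : ℂ) * p.2 + (b : ℂ)) •
          (-((ContinuousLinearMap.mulLeftRight ℂ ℂ) ((c : ℂ) * p.2 + d)⁻¹)
              ((c : ℂ) * p.2 + d)⁻¹).comp
            ((c : ℂ) • ContinuousLinearMap.snd ℂ ℂ ℂ) +
        ((c : ℂ) * p.2 + d)⁻¹ • ((a : ℂ) • ContinuousLinearMap.snd ℂ ℂ ℂ))) p := by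
    have := hC1.prodMk hC2
    unfold gammaAction
    simpa [gammaAction, div_eq_mul_inv, Function.comp] using this
  have hdet' : (a : ℂ) * ((c : ℂ) * p.2 + d) - c * ((a : ℂ) * p.2 + b) = 1 := by
    linear_combination hdetC
  have key : ∀ w : ℂ × ℂ, fderiv ℝ (gammaAction m n a b c d) p w =
      ((w.1 + (n : ℂ) * w.2) / ((c : ℂ) * p.2 + d)
          - (p.1 + m + (n : ℂ) * p.2) * ((c : ℂ) * w.2)
            / (((c : ℂ) * p.2 + d) * ((c : ℂ) * p.2 + d)),
        w.2 / (((c : ℂ) * p.2 + d) * ((c : ℂ) * p.2 + d))) := by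
    intro w
    rw [(hG.restrictScalars ℝ).fderiv]
    simp only [ContinuousLinearMap.coe_restrictScalars', ContinuousLinearMap.prod_apply,
      ContinuousLinearMap.add_apply, ContinuousLinearMap.smul_apply,
      ContinuousLinearMap.comp_apply, ContinuousLinearMap.neg_apply,
      ContinuousLinearMap.mulLeftRight_apply, ContinuousLinearMap.coe_fst',
      ContinuousLinearMap.coe_snd', smul_eq_mul]
    refine Prod.ext ?_ ?_
    · field_simp
      ring
    · show ((a : ℂ) * p.2 + b) * -(((c : ℂ) * p.2 + d)⁻¹ * ((c : ℂ) * w.2)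
          * ((c : ℂ) * p.2 + d)⁻¹) + ((c : ℂ) * p.2 + d)⁻¹ * ((a : ℂ) * w.2)
        = w.2 / (((c : ℂ) * p.2 + d) * ((c : ℂ) * p.2 + d))
      have h1 : ((a : ℂ) * p.2 + b) * -(((c : ℂ) * p.2 + d)⁻¹ * ((c : ℂ) * w.2)
          * ((c : ℂ) * p.2 + d)⁻¹) + ((c : ℂ) * p.2 + d)⁻¹ * ((a : ℂ) * w.2)
          = (((a : ℂ) * ((c : ℂ) * p.2 + d) - c * ((a : ℂ) * p.2 + b)) * w.2)
            / (((c : ℂ) * p.2 + d) * ((c : ℂ) * p.2 + d)) := by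
        field_simp
        ring
      rw [h1, hdet', one_mul]
  -- imaginary part of τ'
  have hnum : ((a : ℂ) * p.2 + b) * ((c : ℂ) * (starRingEnd ℂ) p.2 + d)
      - ((c : ℂ) * p.2 + d) * ((a : ℂ) * (starRingEnd ℂ) p.2 + b)
      = p.2 - (starRingEnd ℂ) p.2 := by
    linear_combination (p.2 - (starRingEnd ℂ) p.2) * hdetC
  have hτ' : ((gammaAction m n a b c d p).2.im : ℂ)
      = (p.2.im : ℂ) / (((c : ℂ) * p.2 + d) * ((c : ℂ) * (starRingEnd ℂ) p.2 + d)) := by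
    rw [im_coe_eq, im_coe_eq]
    simp only [gammaAction, map_div₀, map_add, map_mul, map_intCast]
    rw [div_sub_div _ _ hj hjc, hnum]
    ring
  -- imaginary part of z'
  have hz'sub : (gammaAction m n a b c d p).1 - (starRingEnd ℂ) ((gammaAction m n a b c d p).1)
      = ((p.1 + m + (n : ℂ) * p.2) * ((c : ℂ) * (starRingEnd ℂ) p.2 + d)
          - ((c : ℂ) * p.2 + d) * ((starRingEnd ℂ) p.1 + m + (n : ℂ) * (starRingEnd ℂ) p.2))
        / (((c : ℂ) * p.2 + d) * ((c : ℂ) * (starRingEnd ℂ) p.2 + d)) := by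
    simp only [gammaAction, map_div₀, map_add, map_mul, map_intCast]
    rw [div_sub_div _ _ hj hjc]
  have hy' : (((gammaAction m n a b c d p).1.im : ℝ) : ℂ)
        / (((gammaAction m n a b c d p).2.im : ℝ) : ℂ)
      = ((p.1 + m + (n : ℂ) * p.2) * ((c : ℂ) * (starRingEnd ℂ) p.2 + d)
          - ((c : ℂ) * p.2 + d) * ((starRingEnd ℂ) p.1 + m + (n : ℂ) * (starRingEnd ℂ) p.2))
        / ((2 * Complex.I) * (p.2.im : ℂ)) := by
    rw [hτ', im_coe_eq ((gammaAction m n a b c d p).1), hz'sub]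
    have hJK : ((c : ℂ) * p.2 + d) * ((c : ℂ) * (starRingEnd ℂ) p.2 + d) ≠ 0 := mul_ne_zero hj hjc
    generalize ((c : ℂ) * p.2 + d) * ((c : ℂ) * (starRingEnd ℂ) p.2 + d) = J at hJK ⊢
    field_simp
  -- the eta transformation law
  have heta : ∀ w : ℂ × ℂ,
      etaForm (gammaAction m n a b c d p) (fderiv ℝ (gammaAction m n a b c d) p w)
        = etaForm p w / ((c : ℂ) * p.2 + d) := by
    intro w
    rw [key w]
    simp only [etaForm, Complex.ofReal_div]
    rw [hy', im_coe_eq p.1, im_coe_eq p.2]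
    field_simp [hj, hsub]
    ring
  simp only [omegaForm]
  rw [heta u, heta v, hτ']
  simp only [map_div₀, hjconj]
  field_simp [hτimC, hj, hjc]
end

section
/- Let $d \geq 1$, $g = d+1$, and let $z_1,\dots,z_g : B_1(0)^d \to \mathbb{C}$ be holomorphic functions on the unit polydisc. Suppose that for each $j \in \{1,\dots,g-1\}$ there exists a nonzero constant $f_j' \in \mathbb{C}^\times$ such that $\det\left(\left(\partial z_l/\partial w_m\right)_{l \neq j,\; m}\right) = f_j' \cdot \det\left(\left(\partial z_l/\partial w_m\right)_{l \neq g,\; m}\right)$ on $B_1(0)^d$, and that $\det\left(\left(\partial z_l/\partial w_m\right)_{l \in \{1,\dots,g-1\},\; m}\right)$ is not identically zero. Then there exist constants $f_1,\dots,f_{g-1} \in \mathbb{C}$ and $b \in \mathbb{C}$ such that $f_1 z_1 + \cdots + f_{g-1} z_{g-1} + z_g = b$ identically on $B_1(0)^d$. -/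
open Complex

/-! Statement 9: if all the `d×d` Jacobian minors (omitting one function) of
`g = d+1` holomorphic functions on the unit polydisc are constant nonzero
multiples of the minor omitting the last one, which is not identically zero,
then some nontrivial constant-coefficient linear combination
`f₁z₁ + ⋯ + f_{g-1}z_{g-1} + z_g` is constant. -/

/-- The open unit polydisc in `ℂ^d`. -/
def polydisc (d : ℕ) : Set (Fin d → ℂ) := {w | ∀ j, ‖w j‖ < 1}

/-- The partial derivative `∂ z_l / ∂ w_m` at `w`. -/
noncomputable def pder {d : ℕ} (zl : (Fin d → ℂ) → ℂ) (m : Fin d) (w : Fin d → ℂ) : ℂ :=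
  fderiv ℂ zl w (Pi.single m 1)

/-- The `d × d` Jacobian minor of `z : Fin (d+1) → ((Fin d → ℂ) → ℂ)`
omitting the `j`-th function: rows indexed by `l ≠ j`, columns by `m`. -/
noncomputable def jacMinor {d : ℕ} (z : Fin (d + 1) → (Fin d → ℂ) → ℂ)
    (j : Fin (d + 1)) (w : Fin d → ℂ) : Matrix (Fin d) (Fin d) ℂ :=
  Matrix.of fun l m => pder (z (j.succAbove l)) m w

section Aux

open Metric Set Real

lemma polydisc_eq (d : ℕ) :
    polydisc d = Set.pi Set.univ (fun _ : Fin d => Metric.ball (0:ℂ) 1) := by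
  ext w
  simp [polydisc, Metric.mem_ball, Complex.dist_eq]

lemma isOpen_polydisc (d : ℕ) : IsOpen (polydisc d) := by
  rw [polydisc_eq]
  exact isOpen_set_pi Set.finite_univ fun _ _ => Metric.isOpen_ball

lemma convex_polydisc (d : ℕ) : Convex ℝ (polydisc d) := by
  rw [polydisc_eq]
  exact convex_pi fun _ _ => convex_ball _ _

variable {d : ℕ}

/-- Derivative of a coordinate slice of a differentiable function. -/
lemma hasDerivAt_slice {f : (Fin d → ℂ) → ℂ} {m : Fin d} {w : Fin d → ℂ} {t : ℂ}
    (hf : DifferentiableAt ℂ f (Function.update w m t)) :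
    HasDerivAt (fun s => f (Function.update w m s))
      (fderiv ℂ f (Function.update w m t) (Pi.single m 1)) t := by
  have h1 : HasDerivAt (fun s : ℂ => Function.update w m s) (Pi.single m 1) t := by
    rw [hasDerivAt_pi]
    intro i
    rcases eq_or_ne i m with rfl | hi
    · simp only [Function.update_self, Pi.single_eq_same]
      exact hasDerivAt_id' t
    · simpa [Function.update_apply, hi, Pi.single_apply, hi] using
        (hasDerivAt_const t (w i))
  exact hf.hasFDerivAt.comp_hasDerivAt t h1

lemma pder_eq_deriv_slice {f : (Fin d → ℂ) → ℂ} {m : Fin d} {w : Fin d → ℂ}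
    (hf : DifferentiableAt ℂ f w) :
    pder f m w = deriv (fun s => f (Function.update w m s)) (w m) := by
  have h : DifferentiableAt ℂ f (Function.update w m (w m)) := by
    rwa [Function.update_eq_self]
  have := (hasDerivAt_slice h).deriv
  rw [Function.update_eq_self] at this
  rw [pder, ← this]

/-- Continuity of partial derivatives of a holomorphic function on an open set. -/
lemma pder_continuousAt {f : (Fin d → ℂ) → ℂ} {s : Set (Fin d → ℂ)} (hs : IsOpen s)
    (hf : DifferentiableOn ℂ f s) (m : Fin d) {c : Fin d → ℂ} (hc : c ∈ s) :
    ContinuousAt (pder f m) c := by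
  obtain ⟨ε, εpos, hball⟩ := Metric.isOpen_iff.1 hs c hc
  set ρ : ℝ := ε / 4 with hρ
  have ρpos : 0 < ρ := by positivity
  have hmem : ∀ w ∈ ball c ρ, ∀ t ∈ closedBall (w m) ρ, Function.update w m t ∈ s := by
    intro w hw t ht
    apply hball
    have h1 : dist (Function.update w m t) c ≤ 2 * ρ := by
      rw [dist_pi_le_iff (by positivity)]
      intro j
      rcases eq_or_ne j m with rfl | hj
      · simp only [Function.update_self]
        calc dist t (c j) ≤ dist t (w j) + dist (w j) (c j) := dist_triangle _ _ _
          _ ≤ ρ + ρ := add_le_add (mem_closedBall.1 ht)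
              ((dist_le_pi_dist w c j).trans (mem_ball.1 hw).le)
          _ = 2 * ρ := by ring
      · simp only [Function.update_of_ne hj]
        exact ((dist_le_pi_dist w c j).trans (mem_ball.1 hw).le).trans (by linarith)
    rw [mem_ball]
    have : (2:ℝ) * ρ < ε := by rw [hρ]; linarith
    exact lt_of_le_of_lt h1 this
  have hwmem : ∀ w ∈ ball c ρ, w ∈ s := by
    intro w hw
    have := hmem w hw (w m) (mem_closedBall_self ρpos.le)
    rwa [Function.update_eq_self] at this
  -- the representation of `pder f m` as a Cauchy-type integral
  set g : (Fin d → ℂ) → ℝ → ℂ := fun w θ =>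
    (circleMap 0 ρ θ)⁻¹ * f (Function.update w m (w m + circleMap 0 ρ θ)) with hg
  have hrepr : ∀ w ∈ ball c ρ,
      pder f m w = (2 * π * Complex.I : ℂ)⁻¹ • (Complex.I • ∫ θ in (0:ℝ)..2*π, g w θ) := by
    intro w hw
    set u : ℂ → ℂ := fun t => f (Function.update w m t) with hu
    have hud : DifferentiableOn ℂ u (closedBall (w m) ρ) := by
      intro t ht
      exact (hasDerivAt_slice
        (hf.differentiableAt (hs.mem_nhds (hmem w hw t ht)))).differentiableAt.differentiableWithinAt
    set R : NNReal := ⟨ρ, ρpos.le⟩ with hR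
    have hRρ : (R : ℝ) = ρ := rfl
    have hser : HasFPowerSeriesOnBall u (cauchyPowerSeries u (w m) R) (w m) R := by
      refine DifferentiableOn.hasFPowerSeriesOnBall ?_ ρpos
      rwa [hRρ]
    have hder : deriv u (w m) = (cauchyPowerSeries u (w m) R).coeff 1 :=
      hser.hasFPowerSeriesAt.deriv
    have hcoeff : (cauchyPowerSeries u (w m) (R:ℝ)).coeff 1
        = (2 * π * Complex.I : ℂ)⁻¹ •
          ∮ ζ in C(w m, (R:ℝ)), ((1:ℂ) / (ζ - w m)) ^ 1 • (ζ - w m)⁻¹ • u ζ := by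
      rw [show (cauchyPowerSeries u (w m) (R:ℝ)).coeff 1
        = (cauchyPowerSeries u (w m) (R:ℝ)) 1 (fun _ => (1:ℂ)) from rfl]
      exact cauchyPowerSeries_apply u (w m) (R:ℝ) 1 1
    have hpder : pder f m w = deriv u (w m) :=
      pder_eq_deriv_slice (hf.differentiableAt (hs.mem_nhds (hwmem w hw)))
    rw [hpder, hder, hcoeff, hRρ]
    congr 1
    rw [circleIntegral]
    rw [show (Complex.I • ∫ θ in (0:ℝ)..2*π, g w θ)
      = ∫ θ in (0:ℝ)..2*π, Complex.I • g w θ from (intervalIntegral.integral_smul _ _).symm]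
    refine intervalIntegral.integral_congr fun θ _ => ?_
    have hz0 : circleMap 0 ρ θ ≠ 0 := circleMap_ne_center ρpos.ne'
    have hcm : circleMap (w m) ρ θ = w m + circleMap 0 ρ θ := by
      simp [circleMap]
    simp only [hg, deriv_circleMap, circleMap_sub_center, pow_one, smul_eq_mul, hcm, hu]
    field_simp
    rw [add_sub_cancel_left, mul_div_cancel_left₀ _ (pow_ne_zero 2 hz0)]
  -- continuity of the parametric integral
  have hcont : ContinuousOn (fun w => ∫ θ in (0:ℝ)..2*π, g w θ) (ball c ρ) := by
    rw [continuousOn_iff_continuous_restrict]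
    have hX : Continuous (Function.uncurry fun (x : ↥(ball c ρ)) (θ : ℝ) => g (↑x) θ) := by
      have h1 : Continuous fun p : ↥(ball c ρ) × ℝ => (circleMap 0 ρ p.2)⁻¹ := by
        refine Continuous.inv₀ ((continuous_circleMap 0 ρ).comp continuous_snd) ?_
        exact fun p => circleMap_ne_center ρpos.ne'
      have h2 : Continuous fun p : ↥(ball c ρ) × ℝ =>
          Function.update ((p.1 : Fin d → ℂ)) m ((p.1 : Fin d → ℂ) m + circleMap 0 ρ p.2) := by
        refine Continuous.update ?_ m ?_
        · exact continuous_subtype_val.comp continuous_fst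
        · exact ((continuous_apply m).comp (continuous_subtype_val.comp continuous_fst)).add
            ((continuous_circleMap 0 ρ).comp continuous_snd)
      have h3 : Continuous fun p : ↥(ball c ρ) × ℝ =>
          f (Function.update ((p.1 : Fin d → ℂ)) m ((p.1 : Fin d → ℂ) m + circleMap 0 ρ p.2)) := by
        refine ContinuousOn.comp_continuous hf.continuousOn h2 ?_
        rintro ⟨⟨w, hw⟩, θ⟩
        refine hmem w hw _ ?_
        rw [mem_closedBall]
        have : dist (w m + circleMap 0 ρ θ) (w m) = ‖circleMap 0 ρ θ‖ := by
          rw [Complex.dist_eq]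
          congr 1
          ring
        rw [this, norm_circleMap_zero, abs_of_pos ρpos]
      exact h1.mul h3
    have := intervalIntegral.continuous_parametric_intervalIntegral_of_continuous'
      (μ := MeasureTheory.volume) hX 0 (2*π)
    exact this
  have hcont2 : ContinuousOn (pder f m) (ball c ρ) := by
    refine ContinuousOn.congr ((hcont.const_smul Complex.I).const_smul
      ((2 * π * Complex.I : ℂ)⁻¹)) ?_
    intro w hw
    exact hrepr w hw
  exact hcont2.continuousAt (Metric.isOpen_ball.mem_nhds (mem_ball_self ρpos))

/-- Alternating sum of minors identity (expansion of a determinant with a repeated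
column). -/
lemma alt_sum_det (M : Matrix (Fin (d+1)) (Fin d) ℂ) (m : Fin d) :
    ∑ l : Fin (d+1), (-1:ℂ)^(l:ℕ) * M l m * (M.submatrix l.succAbove id).det = 0 := by
  classical
  set N : Matrix (Fin (d+1)) (Fin (d+1)) ℂ := fun l => Fin.cons (M l m) (M l) with hN
  have h0 : N.det = 0 := by
    rw [← Matrix.det_transpose]
    refine Matrix.det_zero_of_row_eq (M := N.transpose) (i := 0) (j := m.succ)
      (Fin.succ_ne_zero m).symm ?_
    funext l
    change N l 0 = N l m.succ
    simp [hN]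
  rw [Matrix.det_succ_column_zero] at h0
  rw [← h0]
  refine Finset.sum_congr rfl fun l _ => ?_
  have h1 : N l 0 = M l m := by simp [hN]
  have h2 : (N.submatrix l.succAbove Fin.succ) = M.submatrix l.succAbove id := by
    funext a b
    change N (l.succAbove a) b.succ = M (l.succAbove a) b
    simp [hN]
  rw [h1, h2]

end Aux

theorem linear_relation_from_proportional_minors (d : ℕ) (hd : 1 ≤ d)
    (z : Fin (d + 1) → (Fin d → ℂ) → ℂ)
    (hz : ∀ l, DifferentiableOn ℂ (z l) (polydisc d))
    (hprop : ∀ j : Fin d, ∃ f' : ℂ, f' ≠ 0 ∧ ∀ w ∈ polydisc d,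
      (jacMinor z j.castSucc w).det = f' * (jacMinor z (Fin.last d) w).det)
    (hne : ∃ w ∈ polydisc d, (jacMinor z (Fin.last d) w).det ≠ 0) :
    ∃ (f : Fin d → ℂ) (b : ℂ), ∀ w ∈ polydisc d,
      (∑ j : Fin d, f j * z j.castSucc w) + z (Fin.last d) w = b := by
  classical
  obtain ⟨w₀, hw₀, hD0⟩ := hne
  choose f' hf'ne hf'eq using hprop
  set D : (Fin d → ℂ) → ℂ := fun w => (jacMinor z (Fin.last d) w).det with hD
  set fc : Fin d → ℂ := fun j => (-1:ℂ)^(j:ℕ) * (-1:ℂ)^d * f' j with hfc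
  set F : (Fin d → ℂ) → ℂ :=
    fun w => (∑ j : Fin d, fc j * z j.castSucc w) + z (Fin.last d) w with hF
  have hzat : ∀ l, ∀ w ∈ polydisc d, DifferentiableAt ℂ (z l) w := fun l w hw =>
    (hz l).differentiableAt ((isOpen_polydisc d).mem_nhds hw)
  have hFat : ∀ w ∈ polydisc d, DifferentiableAt ℂ F w := by
    intro w hw
    exact (DifferentiableAt.fun_sum fun j _ =>
      ((hzat j.castSucc w hw).const_mul (fc j))).add (hzat (Fin.last d) w hw)
  -- key pointwise identity: each partial of F times D vanishes
  have hFderiv : ∀ w ∈ polydisc d, ∀ m : Fin d,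
      fderiv ℂ F w (Pi.single m 1) * D w = 0 := by
    intro w hw m
    have key := alt_sum_det (Matrix.of fun l k => pder (z l) k w) m
    have hminor : ∀ l : Fin (d+1),
        (Matrix.of fun l k => pder (z l) k w).submatrix l.succAbove id
          = jacMinor z l w := fun l => rfl
    simp only [hminor, Matrix.of_apply] at key
    have hsub : ∀ j : Fin d, (jacMinor z j.castSucc w).det = f' j * D w :=
      fun j => hf'eq j w hw
    rw [Fin.sum_univ_castSucc] at key
    simp only [hsub, Fin.coe_castSucc, Fin.val_last, pder] at key
    have hFder : HasFDerivAt F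
        ((∑ j : Fin d, fc j • fderiv ℂ (z j.castSucc) w) + fderiv ℂ (z (Fin.last d)) w) w := by
      exact (HasFDerivAt.fun_sum fun j _ =>
        ((hzat j.castSucc w hw).hasFDerivAt.const_mul (fc j))).add
        (hzat (Fin.last d) w hw).hasFDerivAt
    have hfd : fderiv ℂ F w (Pi.single m 1)
        = ∑ j : Fin d, fc j * fderiv ℂ (z j.castSucc) w (Pi.single m 1)
          + fderiv ℂ (z (Fin.last d)) w (Pi.single m 1) := by
      rw [hFder.fderiv]
      simp [ContinuousLinearMap.sum_apply, smul_eq_mul]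
    rw [hfd, add_mul, Finset.sum_mul]
    have h2 := congrArg (fun x => (-1:ℂ)^d * x) key
    simp only [mul_zero] at h2
    rw [mul_add, Finset.mul_sum] at h2
    rw [← h2]
    have hpow : (-1:ℂ)^d * (-1:ℂ)^d = 1 := by rw [← mul_pow]; norm_num
    congr 1
    · refine Finset.sum_congr rfl fun j _ => ?_
      simp only [hfc]
      ring
    · linear_combination (-(fderiv ℂ (z (Fin.last d)) w (Pi.single m 1) * D w)) * hpow
  -- continuity of D at w₀
  have hDcont : ContinuousAt D w₀ := by
    have hmat : ContinuousAt (fun w => jacMinor z (Fin.last d) w) w₀ := by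
      refine continuousAt_pi.2 fun a => continuousAt_pi.2 fun b => ?_
      exact pder_continuousAt (isOpen_polydisc d) (hz _) b hw₀
    exact ((continuous_id.matrix_det).continuousAt).comp hmat
  have hev : ∀ᶠ w in nhds w₀, D w ≠ 0 ∧ w ∈ polydisc d :=
    (hDcont.eventually_ne hD0).and ((isOpen_polydisc d).mem_nhds hw₀)
  refine ⟨fc, F w₀, ?_⟩
  intro w₁ hw₁
  -- line from w₀ to w₁
  set v : Fin d → ℂ := w₁ - w₀ with hv
  set L : ℂ → (Fin d → ℂ) := fun t => w₀ + t • v with hL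
  have hL0 : L 0 = w₀ := by simp [hL]
  have hL1 : L 1 = w₁ := by simp [hL, hv]
  have hLdiff : Differentiable ℂ L := by
    exact (differentiable_id.smul_const v).const_add w₀
  set T : Set ℂ := L ⁻¹' polydisc d with hT
  have hTopen : IsOpen T := (isOpen_polydisc d).preimage hLdiff.continuous
  have hT0 : (0:ℂ) ∈ T := by simp [hT, hL0, hw₀]
  have hT1 : (1:ℂ) ∈ T := by simp [hT, hL1, hw₁]
  have hTconv : Convex ℝ T := by
    intro x hx y hy a b ha hb hab
    have hc : (a:ℂ) + (b:ℂ) = 1 := by exact_mod_cast hab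
    have hkey : L (a • x + b • y) = a • L x + b • L y := by
      funext j
      simp only [hL, Pi.add_apply, Pi.smul_apply, Complex.real_smul, smul_eq_mul]
      push_cast
      linear_combination (-(w₀ j)) * hc
    show L (a • x + b • y) ∈ polydisc d
    rw [hkey]
    exact (convex_polydisc d) hx hy ha hb hab
  set φ : ℂ → ℂ := fun t => F (L t) with hφ
  have hφat : ∀ t ∈ T, DifferentiableAt ℂ φ t := fun t ht =>
    (hFat (L t) ht).comp t (hLdiff t)
  have hφdiff : DifferentiableOn ℂ φ T := fun t ht =>
    (hφat t ht).differentiableWithinAt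
  have hφan : AnalyticOnNhd ℂ φ T := hφdiff.analyticOnNhd hTopen
  have hLder : ∀ t : ℂ, HasDerivAt L v t := by
    intro t
    simpa [hL] using ((hasDerivAt_id t).smul_const v).const_add w₀
  have hderiv_eq : ∀ t ∈ T, deriv φ t = fderiv ℂ F (L t) v := fun t ht =>
    ((hFat (L t) ht).hasFDerivAt.comp_hasDerivAt t (hLder t)).deriv
  have hvsum : v = ∑ m : Fin d, v m • (Pi.single m 1 : Fin d → ℂ) := by
    funext j
    simp [Pi.single_apply]
  have hderiv0 : deriv φ =ᶠ[nhds 0] 0 := by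
    have hcont : Filter.Tendsto L (nhds 0) (nhds w₀) := by
      rw [← hL0]; exact hLdiff.continuous.continuousAt
    filter_upwards [hcont.eventually hev] with t ht
    obtain ⟨hDt, hpt⟩ := ht
    have h1 : deriv φ t = fderiv ℂ F (L t) v := hderiv_eq t hpt
    have h2 : ∀ m : Fin d, fderiv ℂ F (L t) (Pi.single m 1) = 0 := fun m =>
      (mul_eq_zero.1 (hFderiv (L t) hpt m)).resolve_right hDt
    rw [h1]
    calc fderiv ℂ F (L t) v
        = ∑ m : Fin d, v m • fderiv ℂ F (L t) (Pi.single m 1) := by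
          conv_lhs => rw [hvsum]
          rw [map_sum]
          exact Finset.sum_congr rfl fun m _ => by rw [(fderiv ℂ F (L t)).map_smul]
      _ = 0 := by simp [h2]
  have hzero : Set.EqOn (deriv φ) 0 T :=
    (hφan.deriv).eqOn_zero_of_preconnected_of_eventuallyEq_zero
      hTconv.isPreconnected hT0 hderiv0
  have hfz : ∀ t ∈ T, fderiv ℂ φ t = 0 := by
    intro t ht
    refine ContinuousLinearMap.ext fun u => ?_
    have : fderiv ℂ φ t u = u • (fderiv ℂ φ t 1) := by
      rw [← (fderiv ℂ φ t).map_smul, smul_eq_mul, mul_one]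
    rw [this, fderiv_apply_one_eq_deriv, hzero ht]
    simp
  have hmvt := Convex.norm_image_sub_le_of_norm_fderiv_le (𝕜 := ℂ) (f := φ)
    (C := 0) (fun t ht => hφat t ht) (fun t ht => by rw [hfz t ht]; simp) hTconv hT0 hT1
  have : φ 1 = φ 0 := by
    have := hmvt
    rw [zero_mul] at this
    have h := norm_le_zero_iff.1 this
    exact sub_eq_zero.1 h
  show (∑ j : Fin d, fc j * z j.castSucc w₁) + z (Fin.last d) w₁ = F w₀
  rw [← hL1, ← hL0]
  exact this
end
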